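/- For real constants c₀,…,c₈ with c₁ ≠ 0, the functions q(x⁴) = (c₁x⁴ + c₀)², u(x³) = (c₂x³ + c₃)², h(x²) = (c₄x² + c₅)², λ₄(x⁴) = c₆(c₁x⁴ + c₀), λ₁(x¹) = c₇cos(c₁x¹) + c₈sin(c₁x¹) satisfy the system: 2h²h''' − h'(2hh'' − (h')²) = 0, 2qq'' − (q')² = 0, 2huu'' + 2huh'' − h(u')² − u(h')² = 0, 4qλ₁'' + (q')²λ₁ = 0, and 2qλ₄' − λ₄q' = 0 (each on the domain where the relevant denominator-free identity makes sense). -/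

import Mathlib

lemma dsq (a b : ℝ) : deriv (fun x : ℝ => (a * x + b) ^ 2)
    = fun x => 2 * (a * x + b) * a := by
  funext x
  have : HasDerivAt (fun x : ℝ => (a * x + b) ^ 2) (2 * (a * x + b) ^ 1 * a) x := by
    have h1 : HasDerivAt (fun x : ℝ => a * x + b) a x := by
      simpa using ((hasDerivAt_id x).const_mul a).add_const b
    simpa using h1.fun_pow 2
  simpa using this.deriv

lemma dlin (a b : ℝ) : deriv (fun x : ℝ => 2 * (a * x + b) * a)
    = fun _ => 2 * a * a := by
  funext x
  have h1 : HasDerivAt (fun x : ℝ => a * x + b) a x := by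
    simpa using ((hasDerivAt_id x).const_mul a).add_const b
  have : HasDerivAt (fun x : ℝ => 2 * (a * x + b) * a) (2 * a * a) x := by
    simpa [mul_comm, mul_assoc, mul_left_comm] using ((h1.const_mul 2).mul_const a)
  exact this.deriv

lemma dlam (c₆ c₁ c₀ : ℝ) : deriv (fun x : ℝ => c₆ * (c₁ * x + c₀))
    = fun _ => c₆ * c₁ := by
  funext x
  have h1 : HasDerivAt (fun x : ℝ => c₁ * x + c₀) c₁ x := by
    simpa using ((hasDerivAt_id x).const_mul c₁).add_const c₀
  exact (h1.const_mul c₆).deriv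

lemma dtrig (c₇ c₈ c₁ : ℝ) :
    deriv (fun x : ℝ => c₇ * Real.cos (c₁ * x) + c₈ * Real.sin (c₁ * x))
    = fun x => c₇ * (-Real.sin (c₁ * x) * c₁) + c₈ * (Real.cos (c₁ * x) * c₁) := by
  funext x
  have h1 : HasDerivAt (fun x : ℝ => c₁ * x) c₁ x := by
    simpa using (hasDerivAt_id x).const_mul c₁
  have hc : HasDerivAt (fun x : ℝ => Real.cos (c₁ * x)) (-Real.sin (c₁ * x) * c₁) x :=
    (Real.hasDerivAt_cos (c₁ * x)).comp x h1
  have hs : HasDerivAt (fun x : ℝ => Real.sin (c₁ * x)) (Real.cos (c₁ * x) * c₁) x :=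
    (Real.hasDerivAt_sin (c₁ * x)).comp x h1
  exact ((hc.const_mul c₇).add (hs.const_mul c₈)).deriv

lemma dtrig2 (c₇ c₈ c₁ : ℝ) :
    deriv (fun x : ℝ => c₇ * (-Real.sin (c₁ * x) * c₁) + c₈ * (Real.cos (c₁ * x) * c₁))
    = fun x => c₇ * (-(Real.cos (c₁ * x) * c₁) * c₁) + c₈ * (-Real.sin (c₁ * x) * c₁ * c₁) := by
  funext x
  have h1 : HasDerivAt (fun x : ℝ => c₁ * x) c₁ x := by
    simpa using (hasDerivAt_id x).const_mul c₁
  have hc : HasDerivAt (fun x : ℝ => Real.cos (c₁ * x)) (-Real.sin (c₁ * x) * c₁) x :=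
    (Real.hasDerivAt_cos (c₁ * x)).comp x h1
  have hs : HasDerivAt (fun x : ℝ => Real.sin (c₁ * x)) (Real.cos (c₁ * x) * c₁) x :=
    (Real.hasDerivAt_sin (c₁ * x)).comp x h1
  have h2 : HasDerivAt (fun x : ℝ => c₇ * (-Real.sin (c₁ * x) * c₁) + c₈ * (Real.cos (c₁ * x) * c₁))
      (c₇ * (-(Real.cos (c₁ * x) * c₁) * c₁) + c₈ * (-Real.sin (c₁ * x) * c₁ * c₁)) x := by
    have := (((hs.fun_neg.mul_const c₁).const_mul c₇).fun_add (((hc.mul_const c₁)).const_mul c₈))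
    convert this using 1
    try ring
  exact h2.deriv

theorem stmt_19 (c₀ c₁ c₂ c₃ c₄ c₅ c₆ c₇ c₈ : ℝ) (hc₁ : c₁ ≠ 0)
    (q u h lam₁ lam₄ : ℝ → ℝ)
    (hq : q = fun x => (c₁ * x + c₀) ^ 2)
    (hu : u = fun x => (c₂ * x + c₃) ^ 2)
    (hh : h = fun x => (c₄ * x + c₅) ^ 2)
    (hlam₄ : lam₄ = fun x => c₆ * (c₁ * x + c₀))
    (hlam₁ : lam₁ = fun x => c₇ * Real.cos (c₁ * x) + c₈ * Real.sin (c₁ * x)) :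
    ∀ x : ℝ,
      2 * (h x) ^ 2 * deriv (deriv (deriv h)) x
        - deriv h x * (2 * h x * deriv (deriv h) x - (deriv h x) ^ 2) = 0 ∧
      2 * q x * deriv (deriv q) x - (deriv q x) ^ 2 = 0 ∧
      2 * h x * u x * deriv (deriv u) x + 2 * h x * u x * deriv (deriv h) x
        - h x * (deriv u x) ^ 2 - u x * (deriv h x) ^ 2 = 0 ∧
      4 * q x * deriv (deriv lam₁) x + (deriv q x) ^ 2 * lam₁ x = 0 ∧
      2 * q x * deriv lam₄ x - lam₄ x * deriv q x = 0 := by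
  subst hq hu hh hlam₄ hlam₁
  intro x
  simp only [dsq, dlin, dlam, dtrig, dtrig2, deriv_const']
  refine ⟨by ring, by ring, by ring, by ring, by ring⟩
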